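/- For every integer m ≥ 3, the numbers c_m^* satisfy c_{2m}^* = 2·c_{2m−1}^* + c_m^*. -/

import Mathlib

/-- The Conway number (correlation) `C(A,B)` of two head/tail strings of length `n`,
encoded as functions `Fin n → Bool` (with `H = true`, `T = false`, and 0-indexed
positions): `C(A,B) = ∑_{i=1}^n δ_i 2^{n-i}` where `δ_i = 1` iff `a_{i+j} = b_{1+j}`
for all `j = 0,…,n-i`. -/
def conway {n : ℕ} (A B : Fin n → Bool) : ℕ :=
  ∑ i : Fin n,
    if (∀ j : Fin n, (i : ℕ) + (j : ℕ) < n → A (i + j) = B j) then 2 ^ (n - 1 - (i : ℕ)) else 0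

/-- `cstar m` is the number of head/tail strings of length `m` beginning with `HT`,
ending with `TH`, whose autocorrelation is `2^{m-1} + 1`. -/
def cstar (m : ℕ) : ℕ :=
  Fintype.card {A : Fin m → Bool //
    (∀ i : Fin m, (i : ℕ) = 0 → A i = true) ∧
    (∀ i : Fin m, (i : ℕ) = 1 → A i = false) ∧
    (∀ i : Fin m, (i : ℕ) = m - 2 → A i = false) ∧
    (∀ i : Fin m, (i : ℕ) = m - 1 → A i = true) ∧
    conway A A = 2 ^ (m - 1) + 1}

/-- `c n = 2 * cstar (n-1)`: by Csirik's characterization, the number of optimal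
strategies for Player I in the Penney-Ante game with strings of length `n`. -/
def c (n : ℕ) : ℕ := 2 * cstar (n - 1)

namespace CsAux

/-- extend a `Fin n`-string to `ℕ` by `false`. -/
def ext {n : ℕ} (A : Fin n → Bool) : ℕ → Bool := fun i => if h : i < n then A ⟨i, h⟩ else false

/-- border of length `k` of a length-`n` string. -/
def brd (n : ℕ) (f : ℕ → Bool) (k : ℕ) : Prop := ∀ j < k, f j = f (n - k + j)

/-- the predicate: starts HT, ends TH, no border of length in `[2, n-1]`. -/
def QQ (n : ℕ) (f : ℕ → Bool) : Prop :=
  f 0 = true ∧ f 1 = false ∧ f (n-2) = false ∧ f (n-1) = true ∧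
    ∀ k < n, 2 ≤ k → ¬ brd n f k

def delF (m : ℕ) (f : ℕ → Bool) : ℕ → Bool := fun i => if i < m - 1 then f i else f (i+1)
def insF (m : ℕ) (b : Bool) (f : ℕ → Bool) : ℕ → Bool :=
  fun i => if i < m - 1 then f i else if i = m - 1 then b else f (i-1)
def tailF (m : ℕ) (f : ℕ → Bool) : ℕ → Bool := fun i => f (m + i)
def phiF (m : ℕ) (w : ℕ → Bool) : ℕ → Bool :=
  fun i => if i < m - 1 then w i else if i = m - 1 then false else w (i - m)

lemma qq_congr {n : ℕ} (hn : 2 ≤ n) {f g : ℕ → Bool} (h : ∀ i < n, f i = g i) :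
    QQ n f ↔ QQ n g := by
  unfold QQ brd
  have e0 : f 0 = g 0 := h 0 (by omega)
  have e1 : f 1 = g 1 := h 1 (by omega)
  have e2 : f (n-2) = g (n-2) := h _ (by omega)
  have e3 : f (n-1) = g (n-1) := h _ (by omega)
  rw [e0, e1, e2, e3]
  constructor <;> intro ⟨a,b,c,d,hb⟩ <;> refine ⟨a,b,c,d, fun k hk hk2 hbr => hb k hk hk2 ?_⟩ <;>
    intro j hj
  · rw [h j (by omega), h (n-k+j) (by omega)]; exact hbr j hj
  · rw [← h j (by omega), ← h (n-k+j) (by omega)]; exact hbr j hj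

lemma periodic {f : ℕ → Bool} {n s : ℕ} (h : ∀ j, j + s < n → f j = f (j + s)) :
    ∀ c i, i + c * s < n → f i = f (i + c * s) := by
  intro c
  induction c with
  | zero => simp
  | succ c ih =>
    intro i hi
    have hle : i + s + c * s = i + (c+1) * s := by ring
    have h1 : f i = f (i + s) := h i (by omega)
    have h2 : f (i + s) = f (i + s + c * s) := ih (i + s) (by omega)
    rw [h1, h2, hle]

lemma per_eq {f : ℕ → Bool} {n s : ℕ} (h : ∀ j, j + s < n → f j = f (j + s))
    {a b : ℕ} (hab : a ≤ b) (hd : s ∣ b - a) (hb : b < n) : f a = f b := by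
  obtain ⟨c, hc⟩ := hd
  rw [Nat.mul_comm] at hc
  have hb' : b = a + c * s := by omega
  subst hb'
  exact periodic h c a hb


lemma brd_per {n k : ℕ} {f : ℕ → Bool} (hk : k ≤ n) (hb : brd n f k) :
    ∀ j, j + (n - k) < n → f j = f (j + (n - k)) := by
  intro j hj
  have h := hb j (by omega)
  rwa [show n - k + j = j + (n - k) by omega] at h

/-- inserting any bit in the middle of a good string of odd length `2m-1`
gives a good string of length `2m`. -/
lemma qq_ins {m : ℕ} (hm : 3 ≤ m) {f : ℕ → Bool} (hf : QQ (2*m-1) f) (b : Bool) :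
    QQ (2*m) (insF m b f) := by
  obtain ⟨hf0, hf1, hf2, hf3, hfb⟩ := hf
  set g := insF m b f with hg
  have gdef : ∀ i, g i = if i < m - 1 then f i else if i = m - 1 then b else f (i-1) :=
    fun i => rfl
  have glo : ∀ i, i < m - 1 → g i = f i := by intro i h; rw [gdef, if_pos h]
  have gmid : g (m-1) = b := by rw [gdef, if_neg (by omega), if_pos rfl]
  have ghi : ∀ i, m ≤ i → g i = f (i-1) := by
    intro i h; rw [gdef, if_neg (by omega), if_neg (by omega)]
  refine ⟨?_, ?_, ?_, ?_, ?_⟩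
  · rw [glo 0 (by omega)]; exact hf0
  · rw [glo 1 (by omega)]; exact hf1
  · rw [ghi (2*m-2) (by omega), show 2*m-2-1 = 2*m-1-2 by omega]; exact hf2
  · rw [ghi (2*m-1) (by omega)]; exact hf3
  · intro k hk hk2 hb
    rcases lt_or_ge k m with hkm | hkm
    · -- 2 ≤ k ≤ m-1 : transfer border to f
      refine hfb k (by omega) hk2 ?_
      intro j hj
      have h1 : g j = g (2*m - k + j) := hb j hj
      rw [glo j (by omega), ghi (2*m-k+j) (by omega)] at h1
      rwa [show 2*m-1-k+j = 2*m-k+j-1 by omega]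
    rcases eq_or_lt_of_le hkm with hkm | hkm
    · -- k = m : border m of f after deletion
      subst hkm
      refine hfb m (by omega) (by omega) ?_
      intro j hj
      rcases lt_or_ge j (m-1) with hj1 | hj1
      · have h1 : g j = g (2*m - m + j) := hb j (by omega)
        rw [glo j hj1, ghi (2*m-m+j) (by omega)] at h1
        rw [show 2*m-1-m+j = 2*m-m+j-1 by omega]
        exact h1
      · -- j = m-1 : need f (m-1) = f (2m-2); both sides are `true`
        have hj' : j = m - 1 := by omega
        subst hj'
        have h0 : g 0 = g (2*m - m + 0) := hb 0 (by omega)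
        rw [glo 0 (by omega), ghi (2*m-m+0) (by omega)] at h0
        rw [show 2*m-m+0-1 = m-1 by omega] at h0
        rw [show 2*m-1-m+(m-1) = 2*m-1-1 by omega, hf3, ← h0, hf0]
    rcases eq_or_lt_of_le (show m + 1 ≤ k by omega) with hkm1 | hkm1
    · -- k = m+1 : contradiction, b = true and b = false
      have h0 : g 0 = g (2*m - k + 0) := hb 0 (by omega)
      have h1 : g (m-1) = g (2*m - k + (m-1)) := hb (m-1) (by omega)
      rw [show 2*m-k+0 = m-1 by omega, gmid, glo 0 (by omega), hf0] at h0
      rw [show 2*m-k+(m-1) = 2*m-2 by omega, gmid,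
        ghi (2*m-2) (by omega), show 2*m-2-1 = 2*m-1-2 by omega, hf2] at h1
      exact absurd (h0.trans h1) (by simp)
    · -- m+2 ≤ k ≤ 2m-1 : small period s = 2m-k with 1 ≤ s ≤ m-2
      obtain ⟨s, hs⟩ : ∃ s, s = 2*m - k := ⟨_, rfl⟩
      have hper : ∀ j, j + s < 2*m → g j = g (j + s) := by
        rw [hs]; exact brd_per (by omega) hb
      rcases eq_or_lt_of_le (show 1 ≤ s by omega) with hs1 | hs2
      · have h01 : g 0 = g (0 + s) := hper 0 (by omega)
        rw [show 0 + s = 1 by omega, glo 0 (by omega), glo 1 (by omega), hf0, hf1] at h01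
        exact absurd h01 (by simp)
      · -- 2 ≤ s ≤ m-2 : find a border of f of length L ≡ 2m [mod s], 2 ≤ L ≤ m-1
        have hsm : s ≤ m - 2 := by omega
        obtain ⟨r, hr⟩ : ∃ r, r = (2*m) % s := ⟨_, rfl⟩
        obtain ⟨L, hL⟩ : ∃ L, L = if r < 2 then r + s else r := ⟨_, rfl⟩
        have hdm := Nat.div_add_mod (2*m) s
        have hrs : r < s := hr ▸ Nat.mod_lt _ (by omega)
        have hL2 : 2 ≤ L := by rw [hL]; split <;> omega
        have hLm : L ≤ m - 1 := by rw [hL]; split <;> omega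
        have hdvd : s ∣ (2*m - L) := by
          rcases lt_or_ge r 2 with h2 | h2
          · refine ⟨2*m/s - 1, ?_⟩
            have hq : 0 < 2*m/s := Nat.div_pos (by omega) (by omega)
            have hmul : s * (2*m/s - 1) + s = s * (2*m/s) := by
              obtain ⟨q, hq'⟩ : ∃ q, 2*m/s = q + 1 := ⟨2*m/s - 1, by omega⟩
              rw [hq']
              simp only [Nat.add_sub_cancel]
              ring
            rw [hL, if_pos h2]; omega
          · exact ⟨2*m/s, by rw [hL, if_neg (by omega)]; omega⟩
        refine hfb L (by omega) hL2 ?_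
        intro j hj
        have e1 : f j = g j := (glo j (by omega)).symm
        have e2 : g (2*m - L + j) = f (2*m-1-L+j) := by
          rw [ghi (2*m-L+j) (by omega), show 2*m-L+j-1 = 2*m-1-L+j by omega]
        have e3 : g j = g (2*m - L + j) := by
          refine per_eq hper (by omega) ?_ (by omega)
          rw [show 2*m-L+j-j = 2*m-L by omega]; exact hdvd
        rw [e1, e3, e2]


/-- if `f` (length `2m`) is good but its middle-deletion is not, then `f (m-1) = T`,
the two halves essentially agree, and the tail half is good of length `m`. -/
lemma del_struct {m : ℕ} (hm : 3 ≤ m) {f : ℕ → Bool} (hf : QQ (2*m) f)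
    (hnf : ¬ QQ (2*m-1) (delF m f)) :
    f (m-1) = false ∧ (∀ j < m - 1, f j = f (m + j)) ∧ QQ m (tailF m f) := by
  obtain ⟨hf0, hf1, hf2, hf3, hfb⟩ := hf
  set g := delF m f with hg
  have glo : ∀ i, i < m - 1 → g i = f i := fun i h => if_pos h
  have ghi : ∀ i, m - 1 ≤ i → g i = f (i+1) := fun i h => if_neg (by omega)
  -- the endpoint conditions for g hold, so a border must exist
  obtain ⟨k, hk, hk2, hb⟩ : ∃ k, k < 2*m-1 ∧ 2 ≤ k ∧ brd (2*m-1) g k := by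
    by_contra hno
    push_neg at hno
    refine hnf ⟨?_, ?_, ?_, ?_, ?_⟩
    · rw [glo 0 (by omega)]; exact hf0
    · rw [glo 1 (by omega)]; exact hf1
    · rw [ghi (2*m-1-2) (by omega), show 2*m-1-2+1 = 2*m-2 by omega]; exact hf2
    · rw [ghi (2*m-1-1) (by omega), show 2*m-1-1+1 = 2*m-1 by omega]; exact hf3
    · intro k hk hk2 hbr
      exact absurd hbr (hno k hk hk2)
  -- case analysis on k
  rcases lt_or_ge k m with hkm | hkm
  · -- 2 ≤ k ≤ m-1 : gives border k of f, contradiction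
    exfalso
    refine hfb k (by omega) hk2 ?_
    intro j hj
    have h1 : g j = g (2*m-1 - k + j) := hb j hj
    rw [glo j (by omega), ghi (2*m-1-k+j) (by omega)] at h1
    rwa [show 2*m-k+j = 2*m-1-k+j+1 by omega]
  rcases eq_or_lt_of_le hkm with hkm | hkm1
  swap
  · -- m+1 ≤ k ≤ 2m-2 : small period s = 2m-1-k, contradiction
    exfalso
    obtain ⟨s, hs⟩ : ∃ s, s = 2*m-1 - k := ⟨_, rfl⟩
    have hper : ∀ j, j + s < 2*m-1 → g j = g (j + s) := by
      rw [hs]; exact brd_per (by omega) hb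
    rcases eq_or_lt_of_le (show 1 ≤ s by omega) with hs1 | hs2
    · have h01 : g 0 = g (0 + s) := hper 0 (by omega)
      rw [show 0 + s = 1 by omega, glo 0 (by omega), glo 1 (by omega), hf0, hf1] at h01
      exact absurd h01 (by simp)
    · have hsm : s ≤ m - 2 := by omega
      obtain ⟨r, hr⟩ : ∃ r, r = (2*m-1) % s := ⟨_, rfl⟩
      obtain ⟨L, hL⟩ : ∃ L, L = if r < 2 then r + s else r := ⟨_, rfl⟩
      have hdm := Nat.div_add_mod (2*m-1) s
      have hrs : r < s := hr ▸ Nat.mod_lt _ (by omega)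
      have hL2 : 2 ≤ L := by rw [hL]; split <;> omega
      have hLm : L ≤ m - 1 := by rw [hL]; split <;> omega
      have hdvd : s ∣ (2*m-1 - L) := by
        rcases lt_or_ge r 2 with h2 | h2
        · refine ⟨(2*m-1)/s - 1, ?_⟩
          have hq : 0 < (2*m-1)/s := Nat.div_pos (by omega) (by omega)
          have hmul : s * ((2*m-1)/s - 1) + s = s * ((2*m-1)/s) := by
            obtain ⟨q, hq'⟩ : ∃ q, (2*m-1)/s = q + 1 := ⟨(2*m-1)/s - 1, by omega⟩
            rw [hq']
            simp only [Nat.add_sub_cancel]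
            ring
          rw [hL, if_pos h2]; omega
        · exact ⟨(2*m-1)/s, by rw [hL, if_neg (by omega)]; omega⟩
      refine hfb L (by omega) hL2 ?_
      intro j hj
      have e1 : f j = g j := (glo j (by omega)).symm
      have e2 : g (2*m-1 - L + j) = f (2*m-L+j) := by
        rw [ghi (2*m-1-L+j) (by omega), show 2*m-1-L+j+1 = 2*m-L+j by omega]
      have e3 : g j = g (2*m-1 - L + j) := by
        refine per_eq hper (by omega) ?_ (by omega)
        rw [show 2*m-1-L+j-j = 2*m-1-L by omega]; exact hdvd
      rw [e1, e3, e2]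
  · -- k = m : extract the structure
    subst hkm
    -- hb : ∀ j < m, g j = g (m-1+j)
    have hbm : ∀ j, j < m → g j = g (m-1+j) := by
      intro j hj
      have := hb j hj
      rwa [show 2*m-1-m+j = m-1+j by omega] at this
    have hagree : ∀ j < m - 1, f j = f (m + j) := by
      intro j hj
      have h1 := hbm j (by omega)
      rwa [glo j hj, ghi (m-1+j) (by omega), show m-1+j+1 = m+j by omega] at h1
    have hfm : f m = true := by
      have h1 := hbm (m-1) (by omega)
      rw [ghi (m-1) (by omega), ghi (m-1+(m-1)) (by omega)] at h1
      rw [show m-1+1 = m by omega, show m-1+(m-1)+1 = 2*m-1 by omega] at h1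
      rw [h1, hf3]
    have hmid : f (m-1) = false := by
      by_contra hc
      have hc' : f (m-1) = true := by
        cases h : f (m-1) with
        | false => exact absurd h hc
        | true => rfl
      refine hfb m (by omega) (by omega) ?_
      intro j hj
      rcases lt_or_ge j (m-1) with hj1 | hj1
      · rw [show 2*m-m+j = m+j by omega]; exact hagree j hj1
      · have hj' : j = m - 1 := by omega
        subst hj'
        rw [show 2*m-m+(m-1) = 2*m-1 by omega, hc', hf3]
    refine ⟨hmid, hagree, ?_, ?_, ?_, ?_, ?_⟩
    · show f (m + 0) = true
      rw [show m + 0 = m by omega]; exact hfm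
    · show f (m + 1) = false
      rw [← hagree 1 (by omega)]; exact hf1
    · show f (m + (m-2)) = false
      rw [show m + (m-2) = 2*m-2 by omega]; exact hf2
    · show f (m + (m-1)) = true
      rw [show m + (m-1) = 2*m-1 by omega]; exact hf3
    · intro t ht ht2 hbt
      refine hfb t (by omega) ht2 ?_
      intro j hj
      have e1 : f j = f (m + j) := hagree j (by omega)
      have e2 : tailF m f j = tailF m f (m - t + j) := hbt j hj
      show f j = f (2*m - t + j)
      rw [e1]
      show tailF m f j = f (2*m-t+j)
      rw [e2]
      show f (m + (m - t + j)) = f (2*m-t+j)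
      rw [show m + (m-t+j) = 2*m-t+j by omega]

/-- `phiF` of a good string of length `m` is good of length `2m`. -/
lemma qq_phi {m : ℕ} (hm : 3 ≤ m) {w : ℕ → Bool} (hw : QQ m w) :
    QQ (2*m) (phiF m w) := by
  obtain ⟨hw0, hw1, hw2, hw3, hwb⟩ := hw
  set p := phiF m w with hp
  have plo : ∀ i, i < m - 1 → p i = w i := fun i h => if_pos h
  have pmid : p (m-1) = false := by
    show (if m-1 < m-1 then _ else if m-1 = m-1 then false else _) = false
    rw [if_neg (by omega), if_pos rfl]
  have phi : ∀ i, m ≤ i → p i = w (i - m) := by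
    intro i h
    show (if i < m-1 then _ else if i = m-1 then false else w (i-m)) = w (i-m)
    rw [if_neg (by omega), if_neg (by omega)]
  refine ⟨?_, ?_, ?_, ?_, ?_⟩
  · rw [plo 0 (by omega)]; exact hw0
  · rw [plo 1 (by omega)]; exact hw1
  · rw [phi (2*m-2) (by omega), show 2*m-2-m = m-2 by omega]; exact hw2
  · rw [phi (2*m-1) (by omega), show 2*m-1-m = m-1 by omega]; exact hw3
  · intro k hk hk2 hb
    rcases lt_or_ge k m with hkm | hkm
    · -- 2 ≤ k ≤ m-1 : border k of w
      refine hwb k (by omega) hk2 ?_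
      intro j hj
      have h1 : p j = p (2*m - k + j) := hb j hj
      rw [plo j (by omega), phi (2*m-k+j) (by omega)] at h1
      rwa [show m-k+j = 2*m-k+j-m by omega]
    rcases eq_or_lt_of_le hkm with hkm | hkm1
    · -- k = m : middle char mismatch
      subst hkm
      have h1 : p (m-1) = p (2*m - m + (m-1)) := hb (m-1) (by omega)
      rw [pmid, phi (2*m-m+(m-1)) (by omega),
        show 2*m-m+(m-1)-m = m-1 by omega, hw3] at h1
      exact absurd h1 (by simp)
    rcases eq_or_lt_of_le (show m + 1 ≤ k by omega) with hkm2 | hkm2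
    · -- k = m+1 : p 0 = p (m-1) gives true = false
      have h1 : p 0 = p (2*m - k + 0) := hb 0 (by omega)
      rw [plo 0 (by omega), hw0, show 2*m-k+0 = m-1 by omega, pmid] at h1
      exact absurd h1 (by simp)
    · -- m+2 ≤ k ≤ 2m-1 : small period s = 2m-k, 1 ≤ s ≤ m-2
      obtain ⟨s, hs⟩ : ∃ s, s = 2*m - k := ⟨_, rfl⟩
      have hper : ∀ j, j + s < 2*m → p j = p (j + s) := by
        rw [hs]; exact brd_per (by omega) hb
      rcases eq_or_lt_of_le (show 1 ≤ s by omega) with hs1 | hs2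
      · have h01 : p 0 = p (0 + s) := hper 0 (by omega)
        rw [show 0 + s = 1 by omega, plo 0 (by omega), plo 1 (by omega), hw0, hw1] at h01
        exact absurd h01 (by simp)
      · -- pick t ≡ m [mod s], 2 ≤ t ≤ m-1 : border t of w
        have hsm : s ≤ m - 2 := by omega
        obtain ⟨r, hr⟩ : ∃ r, r = m % s := ⟨_, rfl⟩
        obtain ⟨t, htdef⟩ : ∃ t, t = if r < 2 then r + s else r := ⟨_, rfl⟩
        have hdm := Nat.div_add_mod m s
        have hrs : r < s := hr ▸ Nat.mod_lt _ (by omega)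
        have ht2 : 2 ≤ t := by rw [htdef]; split <;> omega
        have htm : t ≤ m - 1 := by rw [htdef]; split <;> omega
        have hdvd : s ∣ (m - t) := by
          rcases lt_or_ge r 2 with h2 | h2
          · refine ⟨m/s - 1, ?_⟩
            have hq : 0 < m/s := Nat.div_pos (by omega) (by omega)
            have hmul : s * (m/s - 1) + s = s * (m/s) := by
              obtain ⟨q, hq'⟩ : ∃ q, m/s = q + 1 := ⟨m/s - 1, by omega⟩
              rw [hq']
              simp only [Nat.add_sub_cancel]
              ring
            rw [htdef, if_pos h2]; omega
          · exact ⟨m/s, by rw [htdef, if_neg (by omega)]; omega⟩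
        refine hwb t (by omega) ht2 ?_
        intro j hj
        have e1 : w j = p (m + j) := by
          rw [phi (m+j) (by omega), show m+j-m = j by omega]
        have e2 : w (m - t + j) = p (2*m - t + j) := by
          rw [phi (2*m-t+j) (by omega), show 2*m-t+j-m = m-t+j by omega]
        have e3 : p (m + j) = p (2*m - t + j) := by
          refine per_eq hper (by omega) ?_ (by omega)
          rw [show 2*m-t+j-(m+j) = m-t by omega]; exact hdvd
        rw [e1, e3, e2]

/-- deleting the middle of `phiF m w` is never good: it has a border of length `m`. -/
lemma del_phi_bad {m : ℕ} (hm : 3 ≤ m) {w : ℕ → Bool} (hw : QQ m w) :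
    ¬ QQ (2*m-1) (delF m (phiF m w)) := by
  obtain ⟨hw0, hw1, hw2, hw3, hwb⟩ := hw
  intro hQ
  refine hQ.2.2.2.2 m (by omega) (by omega) ?_
  intro j hj
  set p := phiF m w with hp
  have phi : ∀ i, m ≤ i → p i = w (i - m) := by
    intro i h
    show (if i < m-1 then _ else if i = m-1 then false else w (i-m)) = w (i-m)
    rw [if_neg (by omega), if_neg (by omega)]
  have glo : ∀ i, i < m - 1 → delF m p i = p i := fun i h => if_pos h
  have ghi : ∀ i, m - 1 ≤ i → delF m p i = p (i+1) := fun i h => if_neg (by omega)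
  show delF m p j = delF m p (2*m-1-m+j)
  have hrhs : delF m p (2*m-1-m+j) = w j := by
    rw [ghi (2*m-1-m+j) (by omega), phi (2*m-1-m+j+1) (by omega),
      show 2*m-1-m+j+1-m = j by omega]
  rcases lt_or_ge j (m-1) with hj1 | hj1
  · rw [glo j hj1, hrhs]
    show (if j < m - 1 then w j else _) = w j
    rw [if_pos hj1]
  · have hj' : j = m - 1 := by omega
    subst hj'
    rw [ghi (m-1) (by omega), hrhs, show m-1+1 = m by omega,
      phi m (by omega), show m - m = 0 by omega, hw0, hw3]


section RoundTrips
variable {m : ℕ}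

lemma del_ins (hm : 3 ≤ m) (b : Bool) (f : ℕ → Bool) : delF m (insF m b f) = f := by
  funext i
  unfold delF insF
  by_cases h : i < m - 1
  · rw [if_pos h, if_pos h]
  · rw [if_neg h, if_neg (by omega), if_neg (by omega), Nat.add_sub_cancel]

lemma ins_del (hm : 3 ≤ m) (f : ℕ → Bool) : insF m (f (m-1)) (delF m f) = f := by
  funext i
  unfold insF delF
  rcases lt_trichotomy i (m-1) with h | h | h
  · rw [if_pos h, if_pos h]
  · rw [if_neg (by omega), if_pos h, h]
  · rw [if_neg (by omega), if_neg (by omega), if_neg (by omega),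
      show i - 1 + 1 = i by omega]

lemma tail_phi (hm : 3 ≤ m) (w : ℕ → Bool) : tailF m (phiF m w) = w := by
  funext i
  unfold tailF phiF
  rw [if_neg (by omega), if_neg (by omega), show m + i - m = i by omega]

lemma phi_tail (hm : 3 ≤ m) {f : ℕ → Bool} (h1 : f (m-1) = false)
    (h2 : ∀ j < m - 1, f j = f (m + j)) : phiF m (tailF m f) = f := by
  funext i
  unfold phiF tailF
  rcases lt_trichotomy i (m-1) with h | h | h
  · rw [if_pos h]; exact (h2 i h).symm
  · rw [if_neg (by omega), if_pos h, h, h1]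
  · rw [if_neg (by omega), if_neg (by omega), show m + (i - m) = i by omega]

end RoundTrips

section ExtRes

def res (n : ℕ) (f : ℕ → Bool) : Fin n → Bool := fun i => f i

lemma res_ext {n : ℕ} (A : Fin n → Bool) : res n (ext A) = A := by
  funext i
  show ext A i = A i
  unfold ext
  rw [dif_pos i.isLt]

lemma ext_vanish {n : ℕ} (A : Fin n → Bool) : ∀ i, n ≤ i → ext A i = false :=
  fun i h => dif_neg (by omega)

lemma ext_res_eq {n : ℕ} {f : ℕ → Bool} (h : ∀ i, n ≤ i → f i = false) :
    ext (res n f) = f := by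
  funext i
  unfold ext res
  by_cases hi : i < n
  · rw [dif_pos hi]
  · rw [dif_neg hi, (h i (by omega)).symm]

variable {m : ℕ}

lemma del_vanish {f : ℕ → Bool} (hm : 1 ≤ m) (h : ∀ i, 2*m ≤ i → f i = false) :
    ∀ i, 2*m-1 ≤ i → delF m f i = false := by
  intro i hi
  show (if i < m - 1 then f i else f (i+1)) = false
  rw [if_neg (by omega)]
  exact h _ (by omega)

lemma ins_vanish {b : Bool} {f : ℕ → Bool} (hm : 1 ≤ m) (h : ∀ i, 2*m-1 ≤ i → f i = false) :
    ∀ i, 2*m ≤ i → insF m b f i = false := by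
  intro i hi
  show (if i < m - 1 then f i else if i = m-1 then b else f (i-1)) = false
  rw [if_neg (by omega), if_neg (by omega)]
  exact h _ (by omega)

lemma tail_vanish {f : ℕ → Bool} (h : ∀ i, 2*m ≤ i → f i = false) :
    ∀ i, m ≤ i → tailF m f i = false := by
  intro i hi
  exact h _ (by omega)

lemma phi_vanish {w : ℕ → Bool} (hm : 1 ≤ m) (h : ∀ i, m ≤ i → w i = false) :
    ∀ i, 2*m ≤ i → phiF m w i = false := by
  intro i hi
  show (if i < m - 1 then w i else if i = m-1 then false else w (i-m)) = false
  rw [if_neg (by omega), if_neg (by omega)]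
  exact h _ (by omega)

end ExtRes

def Tset (n : ℕ) := {A : Fin n → Bool // QQ n (ext A)}
attribute [reducible] Tset

open scoped Classical in
noncomputable def Fmap (m : ℕ) (hm : 3 ≤ m) (X : Tset (2*m)) :
    (Tset (2*m-1) × Bool) ⊕ Tset m :=
  if h : QQ (2*m-1) (delF m (ext X.val)) then
    Sum.inl ⟨⟨res (2*m-1) (delF m (ext X.val)), by
      rw [ext_res_eq (del_vanish (by omega) (ext_vanish X.val))]; exact h⟩,
      ext X.val (m-1)⟩
  else
    Sum.inr ⟨res m (tailF m (ext X.val)), by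
      rw [ext_res_eq (tail_vanish (ext_vanish X.val))]
      exact (del_struct hm X.property h).2.2⟩

noncomputable def Gmap (m : ℕ) (hm : 3 ≤ m) :
    (Tset (2*m-1) × Bool) ⊕ Tset m → Tset (2*m)
  | Sum.inl P => ⟨res (2*m) (insF m P.2 (ext P.1.val)), by
      rw [ext_res_eq (ins_vanish (by omega) (ext_vanish P.1.val))]
      exact qq_ins hm P.1.property P.2⟩
  | Sum.inr W => ⟨res (2*m) (phiF m (ext W.val)), by
      rw [ext_res_eq (phi_vanish (by omega) (ext_vanish W.val))]
      exact qq_phi hm W.property⟩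

lemma GF (m : ℕ) (hm : 3 ≤ m) (X : Tset (2*m)) : Gmap m hm (Fmap m hm X) = X := by
  obtain ⟨A, hA⟩ := X
  by_cases h : QQ (2*m-1) (delF m (ext A))
  · rw [Fmap, dif_pos h, Gmap]
    refine Subtype.ext ?_
    show res (2*m) (insF m (ext A (m-1)) (ext (res (2*m-1) (delF m (ext A))))) = A
    rw [ext_res_eq (del_vanish (by omega) (ext_vanish A)), ins_del hm (ext A), res_ext]
  · rw [Fmap, dif_neg h, Gmap]
    obtain ⟨h1, h2, h3⟩ := del_struct hm hA h
    refine Subtype.ext ?_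
    show res (2*m) (phiF m (ext (res m (tailF m (ext A))))) = A
    rw [ext_res_eq (tail_vanish (ext_vanish A)), phi_tail hm h1 h2, res_ext]

lemma FG (m : ℕ) (hm : 3 ≤ m) (Y : (Tset (2*m-1) × Bool) ⊕ Tset m) :
    Fmap m hm (Gmap m hm Y) = Y := by
  rcases Y with ⟨⟨A, hA⟩, b⟩ | ⟨w, hw⟩
  · rw [Gmap, Fmap]
    have hc : delF m (ext (res (2*m) (insF m b (ext A)))) = ext A := by
      rw [ext_res_eq (ins_vanish (by omega) (ext_vanish A)), del_ins hm]
    rw [dif_pos (show QQ (2*m-1) (delF m (ext (res (2*m) (insF m b (ext A))))) by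
      rw [hc]; exact hA)]
    congr 1
    refine Prod.ext (Subtype.ext ?_) ?_
    · show res (2*m-1) (delF m (ext (res (2*m) (insF m b (ext A))))) = A
      rw [hc, res_ext]
    · show ext (res (2*m) (insF m b (ext A))) (m-1) = b
      rw [ext_res_eq (ins_vanish (by omega) (ext_vanish A))]
      show (if m-1 < m - 1 then _ else if m-1 = m-1 then b else _) = b
      rw [if_neg (by omega), if_pos rfl]
  · rw [Gmap, Fmap]
    have hc : delF m (ext (res (2*m) (phiF m (ext w)))) = delF m (phiF m (ext w)) := by
      rw [ext_res_eq (phi_vanish (by omega) (ext_vanish w))]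
    rw [dif_neg (show ¬ QQ (2*m-1) (delF m (ext (res (2*m) (phiF m (ext w))))) by
      rw [hc]; exact del_phi_bad hm hw)]
    congr 1
    refine Subtype.ext ?_
    show res m (tailF m (ext (res (2*m) (phiF m (ext w))))) = w
    rw [ext_res_eq (phi_vanish (by omega) (ext_vanish w)), tail_phi hm, res_ext]

/-- The key cardinality identity, via the explicit bijection. -/
lemma key_card {m : ℕ} (hm : 3 ≤ m) :
    Nat.card {A : Fin (2*m) → Bool // QQ (2*m) (ext A)} =
      2 * Nat.card {A : Fin (2*m-1) → Bool // QQ (2*m-1) (ext A)} +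
        Nat.card {A : Fin m → Bool // QQ m (ext A)} := by
  classical
  have e : Tset (2*m) ≃ (Tset (2*m-1) × Bool) ⊕ Tset m :=
    ⟨Fmap m hm, Gmap m hm, GF m hm, FG m hm⟩
  have hfin : ∀ n : ℕ, Finite (Tset n) := fun n => by
    unfold Tset
    infer_instance
  have := hfin (2*m); have := hfin (2*m-1); have := hfin m
  show Nat.card (Tset (2*m)) = 2 * Nat.card (Tset (2*m-1)) + Nat.card (Tset m)
  rw [Nat.card_congr e, Nat.card_sum, Nat.card_prod, Nat.card_eq_fintype_card (α := Bool),
    Fintype.card_bool]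
  ring


lemma ext_eq {n : ℕ} (A : Fin n → Bool) (i : Fin n) : ext A (i : ℕ) = A i := by
  unfold ext
  rw [dif_pos i.isLt]

/-- the `i`-th summand condition of `conway A A` is border of length `n - i`. -/
lemma Dcond_iff {n : ℕ} (A : Fin n → Bool) (i : Fin n) :
    (∀ j : Fin n, (i : ℕ) + (j : ℕ) < n → A (i + j) = A j) ↔ brd n (ext A) (n - (i : ℕ)) := by
  constructor
  · intro h j hj
    have hjn : j < n := by omega
    have h2 := h ⟨j, hjn⟩ (by simpa using (by omega : (i:ℕ) + j < n))
    have hval : ((i + ⟨j, hjn⟩ : Fin n) : ℕ) = (i : ℕ) + j := by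
      rw [Fin.val_add]
      exact Nat.mod_eq_of_lt (by simpa using (by omega : (i:ℕ) + j < n))
    have e1 : ext A j = A ⟨j, hjn⟩ := ext_eq A ⟨j, hjn⟩
    have e2 : ext A (n - (n - (i:ℕ)) + j) = A (i + ⟨j, hjn⟩) := by
      rw [show n - (n - (i:ℕ)) + j = ((i + ⟨j, hjn⟩ : Fin n) : ℕ) by
        rw [hval]; omega]
      exact ext_eq A _
    rw [e1, e2, h2]
  · intro h j hj
    have hjk : (j : ℕ) < n - (i : ℕ) := by omega
    have hb := h (j : ℕ) hjk
    have hval : ((i + j : Fin n) : ℕ) = (i : ℕ) + (j : ℕ) := by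
      rw [Fin.val_add]
      exact Nat.mod_eq_of_lt hj
    have e1 : ext A (j : ℕ) = A j := ext_eq A j
    have e2 : ext A (n - (n - (i:ℕ)) + (j:ℕ)) = A (i + j) := by
      rw [show n - (n - (i:ℕ)) + (j:ℕ) = ((i + j : Fin n) : ℕ) by rw [hval]; omega]
      exact ext_eq A _
    rw [e1, e2] at hb
    exact hb.symm

lemma conway_eq_iff {n : ℕ} (hn : 3 ≤ n) (A : Fin n → Bool)
    (h0 : ext A 0 = true) (hl : ext A (n-1) = true) :
    conway A A = 2^(n-1) + 1 ↔ ∀ k < n, 2 ≤ k → ¬ brd n (ext A) k := by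
  have hi0 : (0:ℕ) < n := by omega
  have hi2 : n - 1 < n := by omega
  constructor
  · intro hc k hk hk2 hb
    exfalso
    have hi1 : n - k < n := by omega
    have hd0 : (if (∀ j : Fin n, ((⟨0, hi0⟩ : Fin n) : ℕ) + (j : ℕ) < n →
        A (⟨0, hi0⟩ + j) = A j) then 2 ^ (n - 1 - ((⟨0, hi0⟩ : Fin n) : ℕ)) else 0)
        = 2^(n-1) := by
      have hD : (∀ j : Fin n, ((⟨0, hi0⟩ : Fin n) : ℕ) + (j : ℕ) < n →
          A (⟨0, hi0⟩ + j) = A j) := by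
        rw [Dcond_iff]
        intro j hj
        rw [show n - (n - ((⟨0, hi0⟩ : Fin n):ℕ)) + j = j from by
          show n - (n - 0) + j = j; omega]
      rw [if_pos hD, show n - 1 - ((⟨0, hi0⟩ : Fin n):ℕ) = n - 1 from by
        show n - 1 - 0 = n - 1; omega]
    have hd1 : (if (∀ j : Fin n, ((⟨n-k, hi1⟩ : Fin n) : ℕ) + (j : ℕ) < n →
        A (⟨n-k, hi1⟩ + j) = A j) then 2 ^ (n - 1 - ((⟨n-k, hi1⟩ : Fin n) : ℕ)) else 0)
        = 2^(k-1) := by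
      have hD : (∀ j : Fin n, ((⟨n-k, hi1⟩ : Fin n) : ℕ) + (j : ℕ) < n →
          A (⟨n-k, hi1⟩ + j) = A j) := by
        rw [Dcond_iff]
        rw [show n - ((⟨n-k, hi1⟩ : Fin n):ℕ) = k from by show n - (n-k) = k; omega]
        exact hb
      rw [if_pos hD, show n - 1 - ((⟨n-k, hi1⟩ : Fin n):ℕ) = k - 1 from by
        show n - 1 - (n-k) = k - 1; omega]
    have hd2 : (if (∀ j : Fin n, ((⟨n-1, hi2⟩ : Fin n) : ℕ) + (j : ℕ) < n →
        A (⟨n-1, hi2⟩ + j) = A j) then 2 ^ (n - 1 - ((⟨n-1, hi2⟩ : Fin n) : ℕ)) else 0)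
        = 1 := by
      have hD : (∀ j : Fin n, ((⟨n-1, hi2⟩ : Fin n) : ℕ) + (j : ℕ) < n →
          A (⟨n-1, hi2⟩ + j) = A j) := by
        rw [Dcond_iff]
        intro j hj
        have hj0 : j = 0 := by
          have h2 : ((⟨n-1, hi2⟩ : Fin n):ℕ) = n - 1 := rfl
          omega
        subst hj0
        rw [show n - (n - ((⟨n-1, hi2⟩ : Fin n):ℕ)) + 0 = n - 1 from by
          show n - (n - (n-1)) + 0 = n - 1; omega, hl, h0]
      rw [if_pos hD, show n - 1 - ((⟨n-1, hi2⟩ : Fin n):ℕ) = 0 from by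
        show n - 1 - (n-1) = 0; omega, pow_zero]
    have hne01 : (⟨0, hi0⟩ : Fin n) ≠ ⟨n-k, hi1⟩ := fun h => by
      have h' : (0:ℕ) = n - k := congrArg Fin.val h
      omega
    have hne02 : (⟨0, hi0⟩ : Fin n) ≠ ⟨n-1, hi2⟩ := fun h => by
      have h' : (0:ℕ) = n - 1 := congrArg Fin.val h
      omega
    have hne12 : (⟨n-k, hi1⟩ : Fin n) ≠ ⟨n-1, hi2⟩ := fun h => by
      have h' : n - k = n - 1 := congrArg Fin.val h
      omega
    have hsum : ∑ i ∈ ({⟨0, hi0⟩, ⟨n-k, hi1⟩, ⟨n-1, hi2⟩} : Finset (Fin n)),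
        (if (∀ j : Fin n, (i : ℕ) + (j : ℕ) < n → A (i + j) = A j)
          then 2 ^ (n - 1 - (i : ℕ)) else 0) = 2^(n-1) + 2^(k-1) + 1 := by
      rw [Finset.sum_insert (by simp [hne01, hne02]),
        Finset.sum_insert (by simp [hne12]), Finset.sum_singleton, hd0, hd1, hd2]
      omega
    have hle : ∑ i ∈ ({⟨0, hi0⟩, ⟨n-k, hi1⟩, ⟨n-1, hi2⟩} : Finset (Fin n)),
        (if (∀ j : Fin n, (i : ℕ) + (j : ℕ) < n → A (i + j) = A j)
          then 2 ^ (n - 1 - (i : ℕ)) else 0) ≤ conway A A := by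
      rw [conway]
      exact Finset.sum_le_sum_of_subset (Finset.subset_univ _)
    rw [hsum, hc] at hle
    have := Nat.one_le_two_pow (n := k - 1)
    omega
  · intro hnb
    rw [conway]
    have hterm : ∀ i : Fin n,
        (if (∀ j : Fin n, (i : ℕ) + (j : ℕ) < n → A (i + j) = A j)
          then 2 ^ (n - 1 - (i : ℕ)) else 0) =
        (if i = ⟨0, hi0⟩ then 2^(n-1) else 0) + (if i = ⟨n-1, hi2⟩ then 1 else 0) := by
      intro i
      have c0 : (i = ⟨0, hi0⟩) ↔ ((i:ℕ) = 0) := ⟨fun h => by rw [h], fun h => Fin.ext h⟩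
      have c2 : (i = ⟨n-1, hi2⟩) ↔ ((i:ℕ) = n-1) := ⟨fun h => by rw [h], fun h => Fin.ext h⟩
      by_cases hv0 : (i:ℕ) = 0
      · have hD : (∀ j : Fin n, (i : ℕ) + (j : ℕ) < n → A (i + j) = A j) := by
          rw [Dcond_iff]
          intro j hj
          rw [show n - (n - (i:ℕ)) + j = j by omega]
        rw [if_pos hD, if_pos (c0.mpr hv0), if_neg (fun h => by
          have := c2.mp h; omega), hv0]
        simp
      by_cases hv2 : (i:ℕ) = n-1
      · have hD : (∀ j : Fin n, (i : ℕ) + (j : ℕ) < n → A (i + j) = A j) := by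
          rw [Dcond_iff]
          intro j hj
          have hj0 : j = 0 := by omega
          subst hj0
          rw [show n - (n - (i:ℕ)) + 0 = n - 1 by omega, hl, h0]
        rw [if_pos hD, if_neg (fun h => by have := c0.mp h; omega),
          if_pos (c2.mpr hv2), hv2, show n - 1 - (n-1) = 0 by omega, pow_zero]
        omega
      · have hD : ¬ (∀ j : Fin n, (i : ℕ) + (j : ℕ) < n → A (i + j) = A j) := by
          rw [Dcond_iff]
          have hlt := i.isLt
          exact hnb (n - (i:ℕ)) (by omega) (by omega)
        rw [if_neg hD, if_neg (fun h => by have := c0.mp h; omega),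
          if_neg (fun h => by have := c2.mp h; omega)]
    rw [Finset.sum_congr rfl (fun i _ => hterm i), Finset.sum_add_distrib,
      Finset.sum_ite_eq' Finset.univ ((⟨0, hi0⟩ : Fin n)) (fun _ => 2^(n-1)),
      Finset.sum_ite_eq' Finset.univ ((⟨n-1, hi2⟩ : Fin n)) (fun _ => 1),
      if_pos (Finset.mem_univ _), if_pos (Finset.mem_univ _)]

lemma cstar_eq {n : ℕ} (hn : 3 ≤ n) : cstar n = Nat.card (Tset n) := by
  rw [cstar, ← Nat.card_eq_fintype_card]
  refine Nat.card_congr (Equiv.subtypeEquivRight ?_)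
  intro A
  constructor
  · rintro ⟨h1, h2, h3, h4, h5⟩
    have q1 : ext A 0 = true := by
      rw [show (0:ℕ) = ((⟨0, by omega⟩ : Fin n) : ℕ) from rfl, ext_eq]
      exact h1 _ rfl
    have q2 : ext A 1 = false := by
      rw [show (1:ℕ) = ((⟨1, by omega⟩ : Fin n) : ℕ) from rfl, ext_eq]
      exact h2 _ rfl
    have q3 : ext A (n-2) = false := by
      rw [show (n-2:ℕ) = ((⟨n-2, by omega⟩ : Fin n) : ℕ) from rfl, ext_eq]
      exact h3 _ rfl
    have q4 : ext A (n-1) = true := by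
      rw [show (n-1:ℕ) = ((⟨n-1, by omega⟩ : Fin n) : ℕ) from rfl, ext_eq]
      exact h4 _ rfl
    exact ⟨q1, q2, q3, q4, (conway_eq_iff hn A q1 q4).mp h5⟩
  · rintro ⟨q1, q2, q3, q4, q5⟩
    refine ⟨?_, ?_, ?_, ?_, (conway_eq_iff hn A q1 q4).mpr q5⟩
    · intro i hi
      have h := ext_eq A i
      rw [hi] at h
      rw [← h]; exact q1
    · intro i hi
      have h := ext_eq A i
      rw [hi] at h
      rw [← h]; exact q2
    · intro i hi
      have h := ext_eq A i
      rw [hi] at h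
      rw [← h]; exact q3
    · intro i hi
      have h := ext_eq A i
      rw [hi] at h
      rw [← h]; exact q4

end CsAux

/-- For every integer `m ≥ 3`, `c*_{2m} = 2 c*_{2m-1} + c*_m`. -/
theorem cstar_recurrence_even (m : ℕ) (hm : 3 ≤ m) :
    cstar (2 * m) = 2 * cstar (2 * m - 1) + cstar m := by
  rw [CsAux.cstar_eq (by omega : 3 ≤ 2*m), CsAux.cstar_eq (by omega : 3 ≤ 2*m-1),
    CsAux.cstar_eq hm]
  exact CsAux.key_card hm
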